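/- Let i be even and let R be the cyclic rotation moving the last letter to the front. If a word u of length d satisfies |S(u)| ≤ i, then |S(R(u))| ≤ i. -/

import Mathlib

/-- The switch set of a word `u` of length `d` over the alphabet {x,y}. -/
def sw (d : ℕ) (u : ℕ → Bool) : Finset ℕ :=
  (Finset.Ico 1 d).filter (fun j => u j ≠ u (j + 1))

/-- Cyclic rotation moving the last letter to the front. -/
def rot (d : ℕ) (u : ℕ → Bool) : ℕ → Bool :=
  fun n => if n = 1 then u d else u (n - 1)

lemma sw_parity (u : ℕ → Bool) : ∀ d, 1 ≤ d →
    ((sw d u).card % 2 = if u 1 = u d then 0 else 1) := by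
  intro d hd
  induction d, hd using Nat.le_induction with
  | base => simp [sw]
  | succ d hd ih =>
    have hins : Finset.Ico 1 (d + 1) = insert d (Finset.Ico 1 d) := by
      ext j; simp [Finset.mem_Ico]; omega
    have hnot : d ∉ sw d u := by simp [sw]
    have hstep : sw (d + 1) u =
        if u d = u (d + 1) then sw d u else insert d (sw d u) := by
      unfold sw
      rw [hins, Finset.filter_insert]
      by_cases hud : u d = u (d + 1) <;> simp [hud]
    rw [hstep]
    by_cases hud : u d = u (d + 1)
    · rw [if_pos hud, ih, ← hud]
    · rw [if_neg hud, Finset.card_insert_of_notMem hnot]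
      by_cases h1 : u 1 = u d
      · have h2 : ¬ (u 1 = u (d + 1)) := by rw [h1]; exact hud
        rw [if_neg h2]
        rw [if_pos h1] at ih
        omega
      · have h2 : u 1 = u (d + 1) := by
          cases hu1 : u 1 <;> cases hu2 : u (d + 1) <;> cases hu3 : u d <;> simp_all
        rw [if_pos h2]
        rw [if_neg h1] at ih
        omega

/-- For even `i`, if a word has at most `i` switches, so does its rotation. -/
theorem stmt5 (d i : ℕ) (hd : 1 ≤ d) (hi : Even i) (u : ℕ → Bool)
    (h : (sw d u).card ≤ i) :
    (sw d (rot d u)).card ≤ i := by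
  have hinj : ((sw d (rot d u)) \ {1}).card ≤ (sw d u).card := by
    apply Finset.card_le_card_of_injOn (fun j => j - 1)
    · intro j hj
      simp only [Finset.mem_coe, Finset.mem_sdiff, Finset.mem_singleton, sw, Finset.mem_filter,
        Finset.mem_Ico] at hj ⊢
      obtain ⟨⟨⟨h1, h2⟩, h3⟩, h4⟩ := hj
      have hj2 : 2 ≤ j := by omega
      refine ⟨by omega, ?_⟩
      have e1 : rot d u j = u (j - 1) := by
        unfold rot; rw [if_neg (by omega : j ≠ 1)]
      have e2 : rot d u (j + 1) = u j := by
        unfold rot; rw [if_neg (by omega : j + 1 ≠ 1)]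
        congr 1
      rw [e1, e2] at h3
      have hjj : j - 1 + 1 = j := by omega
      rw [hjj]
      exact h3
    · intro a ha b hb hab
      simp only [Finset.coe_sdiff, Set.mem_diff, Finset.mem_coe, Finset.mem_sdiff,
        Finset.mem_singleton, Finset.coe_singleton, Set.mem_singleton_iff, sw,
        Finset.mem_filter, Finset.mem_Ico] at ha hb
      have hab' : a - 1 = b - 1 := hab
      omega
  by_cases h1 : u 1 = u d
  · have hno : (1 : ℕ) ∉ sw d (rot d u) := by
      simp only [sw, Finset.mem_filter, Finset.mem_Ico, not_and, ne_eq, not_not]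
      intro _
      unfold rot
      rw [if_pos rfl, if_neg (by omega : (2:ℕ) ≠ 1)]
      exact h1.symm
    have heq : (sw d (rot d u)) \ {1} = sw d (rot d u) :=
      Finset.sdiff_eq_self_iff_disjoint.mpr (Finset.disjoint_singleton_right.mpr hno)
    rw [← heq]
    exact le_trans hinj h
  · have hpar := sw_parity u d hd
    rw [if_neg h1] at hpar
    have hlt : (sw d u).card < i := by
      rcases hi with ⟨k, hk⟩
      omega
    calc (sw d (rot d u)).card
        ≤ ((sw d (rot d u)) \ {1}).card + ({1} : Finset ℕ).card :=
          Finset.card_le_card_sdiff_add_card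
      _ = ((sw d (rot d u)) \ {1}).card + 1 := by rw [Finset.card_singleton]
      _ ≤ (sw d u).card + 1 := by omega
      _ ≤ i := by omega
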